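/- Suppose the graph G = (V, E) is connected, Q ∈ ℝ^{|E|×|V|} is its oriented incidence matrix, and T = {τ_1, …, τ_d} is a row covering of Q in which every block τ_i induces a path subgraph of G, with M = max_i |τ_i| and r the minimum number of blocks containing any single edge. Then the block gossip method with blocks determined by T satisfies E‖c_k − c*‖² ≤ (1 − r·α(G)/((2 − 2cos(Mπ/(M+1))) d))^k ‖c − c*‖² ≤ (1 − r·α(G)/(4d))^k ‖c − c*‖², where c is the initial vector of node values, c* = mean(c)·1, and α(G) is the algebraic connectivity of G. -/

import Mathlib

open Matrix

noncomputable section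

open Classical in

/-- The Moore–Penrose pseudoinverse of a real matrix, defined via the four Penrose
conditions (which always admit a unique solution). -/
def mpinv {m n : Type*} [Fintype m] [Fintype n] (A : Matrix m n ℝ) : Matrix n m ℝ :=
  if h : ∃ B : Matrix n m ℝ,
      A * B * A = A ∧ B * A * B = B ∧ (A * B)ᵀ = A * B ∧ (B * A)ᵀ = B * A
  then h.choose else 0

/-- Smallest nonzero eigenvalue of a square real matrix. -/
def lambdaMinPos {k : Type*} [Fintype k] [DecidableEq k] (M : Matrix k k ℝ) : ℝ :=
  sInf {μ : ℝ | μ ≠ 0 ∧ μ ∈ spectrum ℝ M}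

/-- Largest eigenvalue of a square real matrix. -/
def lambdaMax {k : Type*} [Fintype k] [DecidableEq k] (M : Matrix k k ℝ) : ℝ :=
  sSup (spectrum ℝ M)

/-- Squared Euclidean norm of a vector. -/
def sqNorm {k : Type*} [Fintype k] (v : k → ℝ) : ℝ := ∑ i, (v i) ^ 2

/-- The row submatrix of `A` with rows indexed by the subset `τ`. -/
def rowSub {ι κ : Type*} (A : Matrix ι κ ℝ) (τ : Finset ι) : Matrix τ κ ℝ :=
  Matrix.of fun i j => A i.1 j

/-- `T = (τ_1, …, τ_d)` is a `(d, a, β, r, R)` row covering of `A`: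
the blocks cover all row indices, `a` lower-bounds the smallest nonzero eigenvalue and `β`
upper-bounds the largest eigenvalue of each `A_τ A_τᵀ`, and `r` (resp. `R`) is the minimum
(resp. maximum) number of blocks containing any single row. -/
structure IsRowCovering {ι κ : Type*} [Fintype ι] [DecidableEq ι] [Fintype κ] {d : ℕ}
    (A : Matrix ι κ ℝ) (τ : Fin d → Finset ι) (a β : ℝ) (r R : ℕ) : Prop where
  cover : ∀ i : ι, ∃ l, i ∈ τ l
  alpha_le : ∀ l, a ≤ lambdaMinPos (rowSub A (τ l) * (rowSub A (τ l))ᵀ)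
  le_beta : ∀ l, lambdaMax (rowSub A (τ l) * (rowSub A (τ l))ᵀ) ≤ β
  r_le : ∀ i : ι, r ≤ (Finset.univ.filter fun l => i ∈ τ l).card
  r_attained : ∃ i : ι, (Finset.univ.filter fun l => i ∈ τ l).card = r
  le_R : ∀ i : ι, (Finset.univ.filter fun l => i ∈ τ l).card ≤ R
  R_attained : ∃ i : ι, (Finset.univ.filter fun l => i ∈ τ l).card = R

/-- One step of the block Kaczmarz method with block `τ`:
`x ↦ x + A_τ† (b_τ − A_τ x)`. -/
def kaczStep {ι κ : Type*} [Fintype ι] [Fintype κ] (A : Matrix ι κ ℝ) (b : ι → ℝ)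
    (τ : Finset ι) (x : κ → ℝ) : κ → ℝ :=
  x + (mpinv (rowSub A τ)).mulVec (fun i : τ => b i.1 - (rowSub A τ).mulVec x i)

/-- The iterates of the block (randomized) Kaczmarz method, as a function of the sequence
`σ` of block choices: `x_k = x_{k-1} + A_τ† (b_τ − A_τ x_{k-1})` with `τ = τs (σ k)`. -/
def kaczIter {ι κ : Type*} [Fintype ι] [Fintype κ] {d : ℕ} (A : Matrix ι κ ℝ) (b : ι → ℝ)
    (τs : Fin d → Finset ι) (x0 : κ → ℝ) : ∀ k : ℕ, (Fin k → Fin d) → κ → ℝ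
  | 0, _ => x0
  | (k + 1), σ => kaczStep A b (τs (σ (Fin.last k))) (kaczIter A b τs x0 k (σ ∘ Fin.castSucc))

/-- `Q` is an oriented incidence matrix of the graph `G`, with `hd e` and `tl e` the head
and tail of the (arbitrary) orientation of the edge indexed by the row `e`: the rows of
`Q` are in bijection with the edges of `G`, and the row of edge `{i, j}` has entry `+1`
in column `i`, `−1` in column `j`, and `0` elsewhere. -/
def IsOrientedIncidence {V E : Type*} [DecidableEq V] (G : SimpleGraph V)
    (hd tl : E → V) (Q : Matrix E V ℝ) : Prop :=
  (∀ e, G.Adj (hd e) (tl e)) ∧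
  (∀ a b : V, G.Adj a b → ∃! e : E, s(hd e, tl e) = s(a, b)) ∧
  (∀ e v, Q e v = if v = hd e then 1 else if v = tl e then -1 else 0)

/-- The set of vertices incident to some edge of the block `τ`. -/
def endpts {V E : Type*} [DecidableEq V] (hd tl : E → V) (τ : Finset E) : Finset V :=
  τ.biUnion fun e => {hd e, tl e}

/-- The edge-induced subgraph determined by the block `τ` is connected: any two of
its vertices are joined by a walk using only edges of `τ`. -/
def IsConnectedBlock {V E : Type*} [DecidableEq V] (hd tl : E → V) (τ : Finset E) : Prop :=
  ∀ a ∈ endpts hd tl τ, ∀ b ∈ endpts hd tl τ,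
    (SimpleGraph.fromEdgeSet {p : Sym2 V | ∃ e ∈ τ, s(hd e, tl e) = p}).Reachable a b

/-- The edge-induced subgraph of the block `τ` is a path: there are distinct vertices
`v_0, …, v_k` such that the edges of `τ` are exactly the consecutive pairs
`{v_i, v_{i+1}}`, each appearing once. -/
def IsPathBlock {V E : Type*} (hd tl : E → V) (τ : Finset E) : Prop :=
  ∃ (k : ℕ) (v : Fin (k + 1) → V) (φ : Fin k → E),
    Function.Injective v ∧ Function.Injective φ ∧
    (∀ e : E, e ∈ τ ↔ ∃ i, φ i = e) ∧
    ∀ i : Fin k, s(hd (φ i), tl (φ i)) = s(v i.castSucc, v i.succ)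


/-! ### Auxiliary lemmas -/

section Aux

open Real Finset

lemma mpinv_spec {m n : Type*} [Fintype m] [Fintype n] (A : Matrix m n ℝ)
    (h : ∃ B : Matrix n m ℝ,
      A * B * A = A ∧ B * A * B = B ∧ (A * B)ᵀ = A * B ∧ (B * A)ᵀ = B * A) :
    A * mpinv A * A = A ∧ mpinv A * A * mpinv A = mpinv A ∧
      (A * mpinv A)ᵀ = A * mpinv A ∧ (mpinv A * A)ᵀ = mpinv A * A := by
  rw [mpinv, dif_pos h]
  exact h.choose_spec

lemma exists_penrose {m n : Type*} [Fintype m] [Fintype n] [DecidableEq m] [DecidableEq n]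
    (A : Matrix m n ℝ) (hker : ∀ x : m → ℝ, Aᵀ.mulVec x = 0 → x = 0) :
    ∃ B : Matrix n m ℝ,
      A * B * A = A ∧ B * A * B = B ∧ (A * B)ᵀ = A * B ∧ (B * A)ᵀ = B * A := by
  have hpd : (A * Aᵀ).PosDef := by
    rw [posDef_iff_dotProduct_mulVec]
    constructor
    · have h2 : (A * Aᵀ)ᵀ = A * Aᵀ := by rw [transpose_mul, transpose_transpose]
      simpa [Matrix.IsHermitian] using h2
    · intro x hx
      have key : star x ⬝ᵥ (A * Aᵀ) *ᵥ x = (Aᵀ *ᵥ x) ⬝ᵥ (Aᵀ *ᵥ x) := by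
        rw [← mulVec_mulVec, dotProduct_mulVec]
        simp [mulVec_transpose]
      rw [key]
      have h1 : Aᵀ *ᵥ x ≠ 0 := fun h => hx (hker x h)
      obtain ⟨i, hi⟩ := Function.ne_iff.mp h1
      refine Finset.sum_pos' (fun j _ => mul_self_nonneg _) ⟨i, Finset.mem_univ i, ?_⟩
      have hi' : (Aᵀ *ᵥ x) i ≠ 0 := by simpa using hi
      exact mul_self_pos.mpr hi'
  have hdet : IsUnit (A * Aᵀ).det := isUnit_iff_ne_zero.mpr hpd.det_pos.ne'
  have hSinv : (A * Aᵀ) * (A * Aᵀ)⁻¹ = 1 := mul_nonsing_inv _ hdet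
  have hSsymm : ((A * Aᵀ)⁻¹)ᵀ = (A * Aᵀ)⁻¹ := by
    rw [transpose_nonsing_inv]
    congr 1
    rw [transpose_mul, transpose_transpose]
  refine ⟨Aᵀ * (A * Aᵀ)⁻¹, ?_, ?_, ?_, ?_⟩
  · rw [show A * (Aᵀ * (A * Aᵀ)⁻¹) * A = (A * Aᵀ) * (A * Aᵀ)⁻¹ * A by
      simp only [Matrix.mul_assoc], hSinv, Matrix.one_mul]
  · rw [show Aᵀ * (A * Aᵀ)⁻¹ * A * (Aᵀ * (A * Aᵀ)⁻¹)
        = Aᵀ * ((A * Aᵀ)⁻¹ * ((A * Aᵀ) * (A * Aᵀ)⁻¹)) by simp only [Matrix.mul_assoc],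
      hSinv, Matrix.mul_one]
  · rw [show A * (Aᵀ * (A * Aᵀ)⁻¹) = (A * Aᵀ) * (A * Aᵀ)⁻¹ by simp only [Matrix.mul_assoc],
      hSinv, transpose_one]
  · rw [transpose_mul, transpose_mul, transpose_transpose, hSsymm, Matrix.mul_assoc]

lemma sin3 (y : ℝ) : Real.sin (3*y) = Real.sin y * (2 * Real.cos (2*y) + 1) := by
  rw [Real.sin_three_mul, Real.cos_two_mul]
  linear_combination (-4*Real.sin y) * Real.sin_sq_add_cos_sq y

lemma amgm_step (a b ui uj : ℝ) (hui : 0 < ui) (huj : 0 < uj) :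
    (a - b)^2 ≤ (1 + uj/ui) * a^2 + (1 + ui/uj) * b^2 := by
  have h : (1 + uj/ui) * a^2 + (1 + ui/uj) * b^2 - (a-b)^2 = (uj*a + ui*b)^2/(ui*uj) := by
    field_simp
    ring
  have h2 : (0:ℝ) ≤ (uj*a + ui*b)^2/(ui*uj) :=
    div_nonneg (sq_nonneg _) (mul_pos hui huj).le
  linarith

lemma path_quadform_bound (n : ℕ) (x : ℕ → ℝ) :
    ∑ i ∈ range n, (x i - x (i+1))^2 ≤
      (2 + 2 * Real.cos (π/(n+1))) * ∑ i ∈ range (n+1), (x i)^2 := by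
  rcases Nat.eq_zero_or_pos n with rfl | hn
  · simp
  obtain ⟨m, rfl⟩ : ∃ m, n = m + 1 := ⟨n - 1, (Nat.succ_pred_eq_of_pos hn).symm⟩
  set n := m + 1
  set φ := π / (n+1) with hφ
  have hn1 : (0:ℝ) < (n:ℝ) + 1 := by positivity
  have hφpos : 0 < φ := by positivity
  have hφtot : ((n:ℝ) + 1) * φ = π := by rw [hφ]; field_simp
  set c := Real.cos φ with hc
  set u : ℕ → ℝ := fun j => Real.sin (((j:ℝ) + 1/2) * φ) with hu
  have hupos : ∀ j : ℕ, j ≤ n → 0 < u j := by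
    intro j hj
    apply Real.sin_pos_of_pos_of_lt_pi
    · positivity
    · have hjn : (j:ℝ) ≤ n := by exact_mod_cast hj
      have : ((j:ℝ) + 1/2) * φ < ((n:ℝ) + 1) * φ := by
        apply mul_lt_mul_of_pos_right _ hφpos
        linarith
      linarith [hφtot]
  have hrec : ∀ j : ℕ, u (j+2) + u j = 2 * c * u (j+1) := by
    intro j
    have e1 : (((j:ℝ)+2) + 1/2)*φ = (((j:ℝ)+1) + 1/2)*φ + φ := by ring
    have e2 : ((j:ℝ) + 1/2)*φ = (((j:ℝ)+1) + 1/2)*φ - φ := by ring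
    simp only [hu]
    push_cast
    rw [e1, e2, Real.sin_add, Real.sin_sub]
    ring
  have hu1 : u 1 = u 0 * (2*c + 1) := by
    have e1 : ((1:ℝ) + 1/2)*φ = 3 * (φ/2) := by ring
    have e2 : ((0:ℝ) + 1/2)*φ = φ/2 := by ring
    have e3 : φ = 2 * (φ/2) := by ring
    simp only [hu]
    push_cast
    rw [e1, e2, sin3, hc]
    nth_rewrite 3 [e3]
    ring
  have hun : u n = u 0 := by
    have e1 : ((n:ℝ) + 1/2)*φ = π - ((0:ℝ) + 1/2)*φ := by
      rw [← hφtot]; ring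
    simp only [hu]
    rw [e1, Real.sin_pi_sub]
    norm_num
  have hunm : u m = u 1 := by
    have e1 : ((m:ℝ) + 1/2)*φ = π - ((1:ℝ) + 1/2)*φ := by
      rw [← hφtot]
      have : (n:ℝ) = (m:ℝ) + 1 := by show ((m+1:ℕ):ℝ) = (m:ℝ) + 1; push_cast; ring
      rw [this]; ring
    simp only [hu]
    rw [e1, Real.sin_pi_sub]
    norm_num
  set A : ℕ → ℝ := fun i => 1 + u (i+1) / u i with hA
  set B : ℕ → ℝ := fun i => 1 + u i / u (i+1) with hB
  have key : ∀ i ∈ range n, (x i - x (i+1))^2 ≤ A i * x i^2 + B i * x (i+1)^2 := by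
    intro i hi
    rw [mem_range] at hi
    exact amgm_step _ _ _ _ (hupos i (le_of_lt hi)) (hupos (i+1) hi)
  have hA0 : A 0 = 2 + 2*c := by
    rw [hA]
    simp only
    rw [hu1]
    field_simp [ne_of_gt (hupos 0 (Nat.zero_le n))]
    ring
  have hBm : B m = 2 + 2*c := by
    rw [hB]
    simp only
    show 1 + u m / u n = 2 + 2*c
    rw [hunm, hun, hu1]
    field_simp [ne_of_gt (hupos 0 (Nat.zero_le n))]
    ring
  have hmid : ∀ i ∈ range m, A (i+1) + B i = 2 + 2*c := by
    intro i hi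
    rw [mem_range] at hi
    have hpos : 0 < u (i+1) := hupos (i+1) (by omega)
    rw [hA, hB]
    simp only
    have hr : u (i+1+1) = 2*c*u (i+1) - u i := by
      have := hrec i
      linarith
    rw [hr]
    field_simp
    ring
  calc ∑ i ∈ range n, (x i - x (i+1))^2
      ≤ ∑ i ∈ range n, (A i * x i^2 + B i * x (i+1)^2) := Finset.sum_le_sum key
    _ = (2 + 2*c) * ∑ i ∈ range (n+1), (x i)^2 := by
        rw [Finset.sum_add_distrib]
        rw [Finset.sum_range_succ' (fun i => A i * x i^2) m]
        rw [Finset.sum_range_succ (fun i => B i * x (i+1)^2) m]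
        rw [Finset.sum_range_succ (fun i => (x i)^2) (m+1)]
        rw [Finset.sum_range_succ' (fun i => (x i)^2) m]
        rw [hA0, hBm]
        have hmm : ∑ i ∈ range m, A (i+1) * x (i+1)^2 + ∑ i ∈ range m, B i * x (i+1)^2
            = (2+2*c) * ∑ i ∈ range m, x (i+1)^2 := by
          rw [← Finset.sum_add_distrib, Finset.mul_sum]
          apply Finset.sum_congr rfl
          intro i hi
          rw [← hmid i hi]
          ring
        linarith [hmm]

lemma spectrum_eq_range_eigenvalues {n : Type*} [Fintype n] [DecidableEq n]
    {A : Matrix n n ℝ} (hA : A.IsHermitian) :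
    spectrum ℝ A = Set.range hA.eigenvalues := by
  have h2 : spectrum ℝ A
      = spectrum ℝ (Matrix.diagonal (RCLike.ofReal ∘ hA.eigenvalues) : Matrix n n ℝ) := by
    conv_lhs => rw [hA.spectral_theorem]
    exact spectrum.units_conjugate (u := Unitary.toUnits hA.eigenvectorUnitary)
  rw [h2, spectrum_diagonal]
  ext μ
  simp [Function.comp]

lemma sum_sq_eq_zero {k : Type*} [Fintype k] {w : k → ℝ} (h : w ⬝ᵥ w = 0) : w = 0 := by
  funext i
  by_contra hi
  have hpos : 0 < ∑ j, w j * w j :=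
    Finset.sum_pos' (fun j _ => mul_self_nonneg _) ⟨i, Finset.mem_univ i, mul_self_pos.mpr hi⟩
  rw [dotProduct] at h
  simp only [Pi.zero_apply] at hi
  linarith

lemma quadform_lower_bound {V E : Type*} [Fintype V] [Fintype E] [DecidableEq V] [Nonempty V]
    (Q : Matrix E V ℝ)
    (hconst : ∀ x : V → ℝ, Q *ᵥ x = 0 → ∀ a b : V, x a = x b)
    (hLne : Qᵀ * Q ≠ 0) :
    0 ≤ lambdaMinPos (Qᵀ * Q) ∧
    ∀ y : V → ℝ, (∑ v, y v) = 0 →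
      lambdaMinPos (Qᵀ * Q) * (y ⬝ᵥ y) ≤ y ⬝ᵥ (Qᵀ * Q) *ᵥ y := by
  set L := Qᵀ * Q with hLdef
  have hLt : Lᵀ = L := by rw [hLdef, transpose_mul, transpose_transpose]
  have hL : L.IsHermitian := by
    show Lᴴ = L
    have h2 : Lᴴ = Lᵀ := by
      ext i j
      simp [conjTranspose_apply]
    rw [h2, hLt]
  have hform : ∀ x : V → ℝ, x ⬝ᵥ L *ᵥ x = (Q *ᵥ x) ⬝ᵥ (Q *ᵥ x) := by
    intro x
    rw [hLdef, ← mulVec_mulVec, dotProduct_mulVec, vecMul_transpose]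
  have hsymm : ∀ x w : V → ℝ, x ⬝ᵥ L *ᵥ w = (L *ᵥ x) ⬝ᵥ w := by
    intro x w
    rw [dotProduct_mulVec, ← mulVec_transpose, hLt]
  have hPSD : ∀ i, 0 ≤ hL.eigenvalues i := by
    intro i
    have h := hL.eigenvalues_eq i
    have h2 : hL.eigenvalues i = ⇑(hL.eigenvectorBasis i) ⬝ᵥ L *ᵥ ⇑(hL.eigenvectorBasis i) := by
      simpa using h
    rw [h2, hform]
    exact Finset.sum_nonneg fun _ _ => mul_self_nonneg _
  set S := {μ : ℝ | μ ≠ 0 ∧ μ ∈ spectrum ℝ L} with hS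
  have hSsub : S ⊆ Set.range hL.eigenvalues := by
    intro μ hμ
    rw [hS, Set.mem_setOf_eq, spectrum_eq_range_eigenvalues hL] at hμ
    exact hμ.2
  have hbdd : BddBelow S := ((Set.finite_range hL.eigenvalues).subset hSsub).bddBelow
  have hevne : ∃ i, hL.eigenvalues i ≠ 0 := by
    by_contra hev
    push_neg at hev
    apply hLne
    have h3 := hL.spectral_theorem
    rw [show (RCLike.ofReal ∘ hL.eigenvalues : V → ℝ) = 0 by funext i; simp [hev i]] at h3
    rw [h3]
    ext i j
    simp [Matrix.mul_apply, Matrix.diagonal_apply]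
  have hSne : S.Nonempty := by
    obtain ⟨i, hi⟩ := hevne
    exact ⟨hL.eigenvalues i, hi, (spectrum_eq_range_eigenvalues hL) ▸ Set.mem_range_self i⟩
  have halpha_nonneg : 0 ≤ lambdaMinPos L := by
    apply le_csInf hSne
    intro μ hμ
    obtain ⟨i, rfl⟩ := hSsub hμ
    exact hPSD i
  refine ⟨halpha_nonneg, ?_⟩
  intro y hy
  set b := hL.eigenvectorBasis with hb
  set yE : EuclideanSpace ℝ V := (WithLp.equiv 2 (V → ℝ)).symm y with hyE
  set zE : EuclideanSpace ℝ V := (WithLp.equiv 2 (V → ℝ)).symm (L *ᵥ y) with hzE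
  have hcoeyE : ∀ v, yE v = y v := fun v => rfl
  have inner_eq : ∀ x w : EuclideanSpace ℝ V, (inner ℝ x w : ℝ) = ∑ v, x v * w v := by
    intro x w
    simp [PiLp.inner_apply, mul_comm]
  set cfun : V → ℝ := fun i => ∑ v, (b i : EuclideanSpace ℝ V) v * y v with hcfun
  have hcomm : ∀ i : V, ∑ v, yE v * (b i) v = cfun i := by
    intro i
    rw [hcfun]
    apply Finset.sum_congr rfl
    intro v _
    rw [hcoeyE]
    ring
  have parseval : ∑ i, cfun i * cfun i = y ⬝ᵥ y := by
    have h := b.sum_inner_mul_inner yE yE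
    simp only [inner_eq] at h
    simp only [hcomm] at h
    calc ∑ i, cfun i * cfun i
        = ∑ i, cfun i * (∑ v, (b i) v * yE v) := rfl
      _ = ∑ v, yE v * yE v := h
      _ = y ⬝ᵥ y := rfl
  have expand : y ⬝ᵥ L *ᵥ y = ∑ i, hL.eigenvalues i * (cfun i * cfun i) := by
    have h := b.sum_inner_mul_inner yE zE
    simp only [inner_eq] at h
    simp only [hcomm] at h
    have hbz : ∀ i, ∑ v, (b i) v * zE v = hL.eigenvalues i * cfun i := by
      intro i
      have h1 : ∑ v, (b i) v * zE v = (⇑(b i) : V → ℝ) ⬝ᵥ (L *ᵥ y) := rfl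
      have h2 : (⇑(b i) : V → ℝ) ⬝ᵥ (L *ᵥ y) = (L *ᵥ ⇑(b i)) ⬝ᵥ y := (hsymm _ y)
      have h3 : L *ᵥ ⇑(b i) = hL.eigenvalues i • ⇑(b i) := hL.mulVec_eigenvectorBasis i
      rw [h1, h2, h3, smul_dotProduct]
      rw [hcfun]
      simp [dotProduct]
    calc y ⬝ᵥ L *ᵥ y = ∑ v, yE v * zE v := rfl
      _ = ∑ i, cfun i * (∑ v, (b i) v * zE v) := h.symm
      _ = ∑ i, hL.eigenvalues i * (cfun i * cfun i) := by
          apply Finset.sum_congr rfl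
          intro i _
          rw [hbz i]
          ring
  have hzerocoef : ∀ i, hL.eigenvalues i = 0 → cfun i = 0 := by
    intro i hi
    have h0 : L *ᵥ ⇑(b i) = 0 := by
      rw [hL.mulVec_eigenvectorBasis i, hi, zero_smul]
    have hq : Q *ᵥ ⇑(b i) = 0 := by
      apply sum_sq_eq_zero
      rw [← hform, h0, dotProduct_zero]
    obtain ⟨v0⟩ := (inferInstance : Nonempty V)
    have hconst' : ∀ v, (b i : EuclideanSpace ℝ V) v = (b i : EuclideanSpace ℝ V) v0 :=
      fun v => hconst _ hq v v0
    rw [hcfun]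
    calc ∑ v, (b i) v * y v = ∑ v, (b i) v0 * y v := by
          apply Finset.sum_congr rfl
          intro v _
          rw [hconst' v]
      _ = (b i) v0 * ∑ v, y v := by rw [Finset.mul_sum]
      _ = 0 := by rw [hy, mul_zero]
  rw [expand, ← parseval, Finset.mul_sum]
  apply Finset.sum_le_sum
  intro i _
  rcases eq_or_ne (hL.eigenvalues i) 0 with h0 | h0
  · rw [h0, hzerocoef i h0]
    simp
  · have hmem : hL.eigenvalues i ∈ S :=
      ⟨h0, (spectrum_eq_range_eigenvalues hL) ▸ Set.mem_range_self i⟩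
    have := csInf_le hbdd hmem
    exact mul_le_mul_of_nonneg_right this (mul_self_nonneg _)

section OI

variable {V E : Type*} [Fintype V] [DecidableEq V] [Fintype E] [DecidableEq E]
  {G : SimpleGraph V} {hd tl : E → V} {Q : Matrix E V ℝ}

set_option linter.unusedSectionVars false

lemma mulVec_oi_apply (hQ : IsOrientedIncidence G hd tl Q) (x : V → ℝ) (e : E) :
    (Q *ᵥ x) e = x (hd e) - x (tl e) := by
  have hne : hd e ≠ tl e := (hQ.1 e).ne
  show ∑ v, Q e v * x v = _
  have h : ∀ v, Q e v * x v =
      (if v = hd e then x v else 0) - (if v = tl e then x v else 0) := by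
    intro v
    rw [hQ.2.2]
    by_cases h1 : v = hd e
    · subst h1; simp [hne]
    · by_cases h2 : v = tl e
      · subst h2; simp [Ne.symm hne, h1]
      · simp [h1, h2]
  rw [Finset.sum_congr rfl (fun v _ => h v), Finset.sum_sub_distrib,
    Finset.sum_ite_eq' univ (hd e) x, Finset.sum_ite_eq' univ (tl e) x]
  simp

lemma rowSub_mulVec (τ : Finset E) (x : V → ℝ) (i : τ) :
    ((rowSub Q τ) *ᵥ x) i = (Q *ᵥ x) i.1 := rfl

lemma edge_diff_sq (hQ : IsOrientedIncidence G hd tl Q) {k : ℕ} {v : Fin (k+1) → V}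
    {φ : Fin k → E}
    (hends : ∀ i : Fin k, s(hd (φ i), tl (φ i)) = s(v i.castSucc, v i.succ))
    (x : V → ℝ) (i : Fin k) :
    ((Q *ᵥ x) (φ i))^2 = (x (v i.castSucc) - x (v i.succ))^2 := by
  rw [mulVec_oi_apply hQ]
  rcases Sym2.eq_iff.mp (hends i) with ⟨h1, h2⟩ | ⟨h1, h2⟩
  · rw [h1, h2]
  · rw [h1, h2]; ring

lemma path_block_image {τ : Finset E} {k : ℕ} {φ : Fin k → E}
    (hφ : Function.Injective φ) (hmem : ∀ e : E, e ∈ τ ↔ ∃ i, φ i = e) :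
    τ = Finset.image φ Finset.univ ∧ τ.card = k := by
  have h1 : τ = Finset.image φ Finset.univ := by
    ext e
    rw [hmem, Finset.mem_image]
    simp
  refine ⟨h1, ?_⟩
  rw [h1, Finset.card_image_of_injective _ hφ]
  simp

lemma sum_block {τ : Finset E} {k : ℕ} {φ : Fin k → E}
    (hφ : Function.Injective φ) (hmem : ∀ e : E, e ∈ τ ↔ ∃ i, φ i = e)
    (g : E → ℝ) : ∑ i : τ, g i.1 = ∑ i : Fin k, g (φ i) := by
  rw [Finset.sum_coe_sort τ g, (path_block_image hφ hmem).1, Finset.sum_image]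
  intro a _ b _ h
  exact hφ h

lemma path_block_ker (hQ : IsOrientedIncidence G hd tl Q) {τ : Finset E}
    (hp : IsPathBlock hd tl τ) :
    ∀ x : τ → ℝ, (rowSub Q τ)ᵀ *ᵥ x = 0 → x = 0 := by
  obtain ⟨k, v, φ, hvinj, hφinj, hmem, hends⟩ := hp
  intro x hx
  have main : ∀ j : Fin k, x ⟨φ j, (hmem _).mpr ⟨j, rfl⟩⟩ = 0 := by
    intro j
    set y : V → ℝ := fun w => if ∃ m : Fin (k+1), m.1 ≤ j.1 ∧ v m = w then 1 else 0 with hy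
    have hyv : ∀ m : Fin (k+1), y (v m) = if m.1 ≤ j.1 then 1 else 0 := by
      intro m
      rw [hy]
      simp only
      by_cases h : m.1 ≤ j.1
      · rw [if_pos ⟨m, h, rfl⟩, if_pos h]
      · rw [if_neg, if_neg h]
        rintro ⟨m', hm', hvm⟩
        exact h (hvinj hvm ▸ hm')
    have hδ : ∀ i : Fin k,
        (if (i.castSucc).1 ≤ j.1 then (1:ℝ) else 0) - (if (i.succ).1 ≤ j.1 then (1:ℝ) else 0)
          = if i = j then 1 else 0 := by
      intro i
      simp only [Fin.coe_castSucc, Fin.val_succ]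
      by_cases hij : i = j
      · subst hij
        rw [if_pos le_rfl, if_neg (by omega), if_pos rfl]
        norm_num
      · have hne : i.1 ≠ j.1 := fun h => hij (Fin.ext h)
        rw [if_neg hij]
        by_cases hlt : i.1 + 1 ≤ j.1
        · rw [if_pos (by omega), if_pos hlt]; norm_num
        · rw [if_neg (by omega), if_neg hlt]; norm_num
    have hcompute : ∀ i : Fin k, (Q *ᵥ y) (φ i) = (if i = j then (1:ℝ) else 0) ∨
        (Q *ᵥ y) (φ i) = -(if i = j then (1:ℝ) else 0) := by
      intro i
      rw [mulVec_oi_apply hQ]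
      rcases Sym2.eq_iff.mp (hends i) with ⟨h1, h2⟩ | ⟨h1, h2⟩
      · left; rw [h1, h2, hyv, hyv]; linarith [hδ i]
      · right; rw [h1, h2, hyv, hyv]; linarith [hδ i]
    have h0 : x ⬝ᵥ ((rowSub Q τ) *ᵥ y) = 0 := by
      rw [dotProduct_mulVec, ← mulVec_transpose, hx]
      exact zero_dotProduct y
    set X : Fin k → ℝ := fun i => x ⟨φ i, (hmem _).mpr ⟨i, rfl⟩⟩ with hX
    set g : E → ℝ := fun e => (if h : e ∈ τ then x ⟨e, h⟩ else 0) * (Q *ᵥ y) e with hg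
    have h1 : x ⬝ᵥ ((rowSub Q τ) *ᵥ y) = ∑ i : Fin k, X i * (Q *ᵥ y) (φ i) := by
      have e1 : x ⬝ᵥ ((rowSub Q τ) *ᵥ y) = ∑ i : τ, g i.1 := by
        apply Finset.sum_congr rfl
        intro i _
        rw [hg]
        simp only [rowSub_mulVec]
        rw [dif_pos i.2]
      rw [e1, sum_block hφinj hmem g]
      apply Finset.sum_congr rfl
      intro i _
      rw [hg, hX]
      simp only
      rw [dif_pos ((hmem _).mpr ⟨i, rfl⟩)]
    have h2 : ∑ i : Fin k, X i * (Q *ᵥ y) (φ i) = X j * (Q *ᵥ y) (φ j) := by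
      apply Finset.sum_eq_single j
      · intro i _ hij
        rcases hcompute i with hc | hc <;> rw [hc, if_neg hij] <;> ring
      · intro h
        exact absurd (Finset.mem_univ j) h
    have h3 : X j * (Q *ᵥ y) (φ j) = 0 := by rw [← h2, ← h1, h0]
    rcases hcompute j with hc | hc <;> rw [hc, if_pos rfl] at h3
    · simpa using h3
    · have hXj : X j = 0 := by linarith [h3]
      exact hXj
  funext i
  obtain ⟨jj, hjj⟩ := (hmem i.1).mp i.2
  have heq : x i = x ⟨φ jj, (hmem _).mpr ⟨jj, rfl⟩⟩ := by
    congr 1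
    exact Subtype.ext hjj.symm
  rw [heq, main jj]
  rfl

lemma path_block_norm_bound (hQ : IsOrientedIncidence G hd tl Q) {τ : Finset E}
    (hp : IsPathBlock hd tl τ) (x : V → ℝ) :
    ((rowSub Q τ) *ᵥ x) ⬝ᵥ ((rowSub Q τ) *ᵥ x) ≤
      (2 + 2 * Real.cos (π/(τ.card+1))) * (x ⬝ᵥ x) := by
  obtain ⟨k, v, φ, hvinj, hφinj, hmem, hends⟩ := hp
  have hcard : τ.card = k := (path_block_image hφinj hmem).2
  rw [hcard]
  set z : ℕ → ℝ := fun m => if h : m < k+1 then x (v ⟨m, h⟩) else 0 with hz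
  have hzv : ∀ m : Fin (k+1), z m.1 = x (v m) := by
    intro m
    rw [hz]
    simp only
    rw [dif_pos m.2]
  have e1 : ((rowSub Q τ) *ᵥ x) ⬝ᵥ ((rowSub Q τ) *ᵥ x)
      = ∑ i : Fin k, ((Q *ᵥ x) (φ i))^2 := by
    have h : ((rowSub Q τ) *ᵥ x) ⬝ᵥ ((rowSub Q τ) *ᵥ x)
        = ∑ i : τ, (fun e => ((Q *ᵥ x) e)^2) i.1 := by
      apply Finset.sum_congr rfl
      intro i _
      simp only [rowSub_mulVec]
      ring
    rw [h]
    simpa using sum_block hφinj hmem (fun e => ((Q *ᵥ x) e)^2)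
  have e2 : ∀ i : Fin k, ((Q *ᵥ x) (φ i))^2 = (z i.1 - z (i.1+1))^2 := by
    intro i
    rw [edge_diff_sq hQ hends]
    have c1 : z i.1 = x (v i.castSucc) := by
      rw [show (i.1 : ℕ) = (i.castSucc).1 from rfl, hzv i.castSucc]
    have c2 : z (i.1+1) = x (v i.succ) := by
      rw [show (i.1+1 : ℕ) = (i.succ).1 from rfl, hzv i.succ]
    rw [c1, c2]
  have e3 : ∑ i : Fin k, ((Q *ᵥ x) (φ i))^2 = ∑ m ∈ range k, (z m - z (m+1))^2 := by
    rw [Finset.sum_congr rfl (fun i _ => e2 i)]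
    exact Fin.sum_univ_eq_sum_range (fun m => (z m - z (m+1))^2) k
  have e4 : ∑ m ∈ range (k+1), (z m)^2 ≤ x ⬝ᵥ x := by
    have f1 : ∑ m ∈ range (k+1), (z m)^2 = ∑ m : Fin (k+1), (x (v m))^2 := by
      rw [← Fin.sum_univ_eq_sum_range (fun m => (z m)^2) (k+1)]
      apply Finset.sum_congr rfl
      intro m _
      rw [hzv m]
    rw [f1]
    have f2 : ∑ m : Fin (k+1), (x (v m))^2 = ∑ w ∈ Finset.image v Finset.univ, (x w)^2 := by
      rw [Finset.sum_image (fun a _ b _ h => hvinj h)]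
    rw [f2]
    have f3 : x ⬝ᵥ x = ∑ w : V, (x w)^2 := by
      apply Finset.sum_congr rfl
      intros; ring
    rw [f3]
    exact Finset.sum_le_sum_of_subset_of_nonneg (Finset.subset_univ _)
      (fun w _ _ => sq_nonneg _)
  have hCnn : 0 ≤ 2 + 2 * Real.cos (π/(k+1)) := by
    nlinarith [Real.neg_one_le_cos (π/(k+1))]
  calc ((rowSub Q τ) *ᵥ x) ⬝ᵥ ((rowSub Q τ) *ᵥ x)
      = ∑ m ∈ range k, (z m - z (m+1))^2 := by rw [e1, e3]
    _ ≤ (2 + 2 * Real.cos (π/(k+1))) * ∑ m ∈ range (k+1), (z m)^2 :=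
        path_quadform_bound k z
    _ ≤ (2 + 2 * Real.cos (π/(k+1))) * (x ⬝ᵥ x) :=
        mul_le_mul_of_nonneg_left e4 hCnn

lemma const_of_mulVec_zero (hQ : IsOrientedIncidence G hd tl Q) (hG : G.Connected) :
    ∀ x : V → ℝ, Q *ᵥ x = 0 → ∀ a b : V, x a = x b := by
  intro x hx a b
  have hadj : ∀ u w : V, G.Adj u w → x u = x w := by
    intro u w huw
    obtain ⟨e, he, _⟩ := hQ.2.1 u w huw
    have h0 : (Q *ᵥ x) e = 0 := congrFun hx e
    rw [mulVec_oi_apply hQ] at h0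
    rcases Sym2.eq_iff.mp he with ⟨h1, h2⟩ | ⟨h1, h2⟩
    · rw [← h1, ← h2]; linarith
    · rw [← h1, ← h2]; linarith
  obtain ⟨w⟩ := hG.preconnected a b
  induction w with
  | nil => rfl
  | cons h p ih => exact (hadj _ _ h).trans ih

lemma L_ne_zero (hQ : IsOrientedIncidence G hd tl Q) (e0 : E) : Qᵀ * Q ≠ 0 := by
  intro h
  have h1 : (Qᵀ * Q) (hd e0) (hd e0) = 0 := by rw [h]; rfl
  rw [Matrix.mul_apply] at h1
  have h2 : ∀ e : E, Qᵀ (hd e0) e * Q e (hd e0) = Q e (hd e0) * Q e (hd e0) := fun e => by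
    rw [transpose_apply]
  rw [Finset.sum_congr rfl (fun e _ => h2 e)] at h1
  have h3 : Q e0 (hd e0) * Q e0 (hd e0) ≤ ∑ e, Q e (hd e0) * Q e (hd e0) :=
    Finset.single_le_sum (f := fun e => Q e (hd e0) * Q e (hd e0))
      (fun e _ => mul_self_nonneg _) (Finset.mem_univ e0)
  rw [h1, hQ.2.2, if_pos rfl] at h3
  norm_num at h3

lemma rowSub_const_mulVec (hQ : IsOrientedIncidence G hd tl Q) (τ : Finset E)
    (cst : V → ℝ) (hcst : ∀ a b : V, cst a = cst b) :
    rowSub Q τ *ᵥ cst = 0 := by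
  funext i
  rw [rowSub_mulVec, mulVec_oi_apply hQ]
  rw [hcst (hd i.1) (tl i.1)]
  simp

end OI

lemma kaczStep_zero {ι κ : Type*} [Fintype ι] [Fintype κ] (A : Matrix ι κ ℝ)
    (τ : Finset ι) (x : κ → ℝ) :
    kaczStep A 0 τ x = x - (mpinv (rowSub A τ) * rowSub A τ) *ᵥ x := by
  unfold kaczStep
  have h1 : (fun i : τ => (0 : ι → ℝ) i.1 - (rowSub A τ).mulVec x i)
      = -((rowSub A τ) *ᵥ x) := by
    funext i
    simp
  rw [h1, Matrix.mulVec_neg, sub_eq_add_neg, ← Matrix.mulVec_mulVec]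

lemma sqNorm_eq_dot {k : Type*} [Fintype k] (v : k → ℝ) : sqNorm v = v ⬝ᵥ v := by
  apply Finset.sum_congr rfl
  intros
  ring

lemma dot_self_nonneg {k : Type*} [Fintype k] (v : k → ℝ) : 0 ≤ v ⬝ᵥ v :=
  Finset.sum_nonneg fun _ _ => mul_self_nonneg _

section Descent

variable {V E : Type*} [Fintype V] [DecidableEq V] [Fintype E] [DecidableEq E]
  {G : SimpleGraph V} {hd tl : E → V} {Q : Matrix E V ℝ}

set_option linter.unusedSectionVars false

lemma block_descent (hQ : IsOrientedIncidence G hd tl Q) {τ : Finset E}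
    (hp : IsPathBlock hd tl τ) {M : ℕ} (hcard : τ.card ≤ M)
    (hβpos : 0 < 2 + 2 * Real.cos (π/(M+1))) (y : V → ℝ) :
    (y - (mpinv (rowSub Q τ) * rowSub Q τ) *ᵥ y) ⬝ᵥ
        (y - (mpinv (rowSub Q τ) * rowSub Q τ) *ᵥ y) ≤
      y ⬝ᵥ y - ((rowSub Q τ *ᵥ y) ⬝ᵥ (rowSub Q τ *ᵥ y)) / (2 + 2 * Real.cos (π/(M+1))) := by
  obtain ⟨hABA, hBAB, hABt, hBAt⟩ := mpinv_spec _ (exists_penrose _ (path_block_ker hQ hp))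
  set A := rowSub Q τ with hA
  set B := mpinv A with hB
  set P := B * A with hP
  have hPP : P * P = P := by
    rw [hP, show B * A * (B * A) = (B * A * B) * A by simp only [Matrix.mul_assoc], hBAB]
  have hAP : A * P = A := by
    rw [hP, ← Matrix.mul_assoc, hABA]
  have hdotP : (P *ᵥ y) ⬝ᵥ (P *ᵥ y) = (P *ᵥ y) ⬝ᵥ y := by
    conv_lhs => rw [dotProduct_mulVec, ← mulVec_transpose, hBAt, mulVec_mulVec, hPP]
  have key : (y - P *ᵥ y) ⬝ᵥ (y - P *ᵥ y) = y ⬝ᵥ y - (P *ᵥ y) ⬝ᵥ (P *ᵥ y) := by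
    rw [sub_dotProduct, dotProduct_sub, dotProduct_sub]
    have e2 : y ⬝ᵥ (P *ᵥ y) = (P *ᵥ y) ⬝ᵥ y := dotProduct_comm _ _
    linarith [hdotP, e2]
  have hAPy : A *ᵥ (P *ᵥ y) = A *ᵥ y := by rw [mulVec_mulVec, hAP]
  have hτβ : 2 + 2*Real.cos (π/(τ.card+1)) ≤ 2 + 2*Real.cos (π/(M+1)) := by
    have h1 : π/((M:ℝ)+1) ≤ π/((τ.card:ℝ)+1) := by
      have hcM : ((τ.card:ℝ)+1) ≤ (M:ℝ)+1 := by
        have : (τ.card:ℝ) ≤ M := by exact_mod_cast hcard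
        linarith
      gcongr <;> first
        | exact Real.pi_pos.le
        | exact hcM
        | positivity
    have h2 : π/((τ.card:ℝ)+1) ≤ π := by
      apply div_le_self Real.pi_pos.le
      have : (0:ℝ) ≤ (τ.card:ℝ) := by positivity
      linarith
    have h3 : (0:ℝ) ≤ π/((M:ℝ)+1) := by positivity
    have := Real.cos_le_cos_of_nonneg_of_le_pi h3 h2 h1
    linarith
  have hPynn : 0 ≤ (P *ᵥ y) ⬝ᵥ (P *ᵥ y) := dot_self_nonneg _
  have hAy : (A *ᵥ y) ⬝ᵥ (A *ᵥ y) ≤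
      (2 + 2*Real.cos (π/(M+1))) * ((P *ᵥ y) ⬝ᵥ (P *ᵥ y)) := by
    rw [← hAPy]
    calc (A *ᵥ (P *ᵥ y)) ⬝ᵥ (A *ᵥ (P *ᵥ y))
        ≤ (2 + 2*Real.cos (π/(τ.card+1))) * ((P *ᵥ y) ⬝ᵥ (P *ᵥ y)) :=
          path_block_norm_bound hQ hp (P *ᵥ y)
      _ ≤ (2 + 2*Real.cos (π/(M+1))) * ((P *ᵥ y) ⬝ᵥ (P *ᵥ y)) :=
          mul_le_mul_of_nonneg_right hτβ hPynn
  rw [key]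
  have hdiv : ((A *ᵥ y) ⬝ᵥ (A *ᵥ y)) / (2 + 2*Real.cos (π/(M+1)))
      ≤ (P *ᵥ y) ⬝ᵥ (P *ᵥ y) := by
    rw [div_le_iff₀ hβpos]
    linarith [hAy]
  linarith

lemma block_sum_pres (hQ : IsOrientedIncidence G hd tl Q) {τ : Finset E}
    (hp : IsPathBlock hd tl τ) (x : V → ℝ) :
    ∑ v, kaczStep Q 0 τ x v = ∑ v, x v := by
  obtain ⟨hABA, hBAB, hABt, hBAt⟩ := mpinv_spec _ (exists_penrose _ (path_block_ker hQ hp))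
  rw [kaczStep_zero]
  have hsub : ∑ v, (x - (mpinv (rowSub Q τ) * rowSub Q τ) *ᵥ x) v
      = ∑ v, x v - ∑ v, ((mpinv (rowSub Q τ) * rowSub Q τ) *ᵥ x) v := by
    rw [← Finset.sum_sub_distrib]
    rfl
  rw [hsub]
  have hz : ∑ v, ((mpinv (rowSub Q τ) * rowSub Q τ) *ᵥ x) v = 0 := by
    have h1 : ∑ v, ((mpinv (rowSub Q τ) * rowSub Q τ) *ᵥ x) v
        = (fun _ : V => (1:ℝ)) ⬝ᵥ ((mpinv (rowSub Q τ) * rowSub Q τ) *ᵥ x) := by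
      rw [dotProduct]
      apply Finset.sum_congr rfl
      intros
      rw [one_mul]
    rw [h1, dotProduct_mulVec, ← mulVec_transpose, hBAt, ← mulVec_mulVec,
      rowSub_const_mulVec hQ τ (fun _ : V => (1:ℝ)) (fun a b => rfl), mulVec_zero, zero_dotProduct]
  rw [hz, sub_zero]

end Descent

end Aux

open Real in
/-- **Corollary (block gossip with path blocks).** If `G` is connected with oriented
incidence matrix `Q` and `T = (τ_1, …, τ_d)` is a covering of the edges of `G` by blocks
inducing path subgraphs, with `M = max_i |τ_i|` and `r` the minimum number of blocks
containing any single edge, then block gossip (expectation = average over all uniform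
i.i.d. block choice sequences) satisfies
`E‖c_k − c*‖² ≤ (1 − r α(G)/((2 − 2 cos(Mπ/(M+1))) d))ᵏ ‖c − c*‖²
  ≤ (1 − r α(G)/(4d))ᵏ ‖c − c*‖²`,
where `c* = mean(c)·1` and the algebraic connectivity `α(G)` is the smallest nonzero
eigenvalue of `L = QᵀQ`. -/
theorem block_gossip_path_blocks {V E : Type*} [Fintype V] [DecidableEq V]
    [Fintype E] [DecidableEq E] {d : ℕ}
    (G : SimpleGraph V) (hG : G.Connected)
    (hd tl : E → V) (Q : Matrix E V ℝ) (hQ : IsOrientedIncidence G hd tl Q)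
    (τs : Fin d → Finset E)
    (hcover : ∀ e : E, ∃ l, e ∈ τs l)
    (hpath : ∀ l, IsPathBlock hd tl (τs l))
    (M : ℕ) (hM_le : ∀ l, (τs l).card ≤ M) (hM_att : ∃ l, (τs l).card = M)
    (r : ℕ)
    (hr_le : ∀ e : E, r ≤ (Finset.univ.filter fun l => e ∈ τs l).card)
    (hr_att : ∃ e : E, (Finset.univ.filter fun l => e ∈ τs l).card = r)
    (c cstar : V → ℝ)
    (hcstar : cstar = fun _ => (∑ v, c v) / (Fintype.card V : ℝ)) :
    ∀ k : ℕ,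
      (∑ σ : Fin k → Fin d, sqNorm (kaczIter Q 0 τs c k σ - cstar)) / (d : ℝ) ^ k ≤
        (1 - (r : ℝ) * lambdaMinPos (Qᵀ * Q) /
            ((2 - 2 * Real.cos (M * π / (M + 1))) * d)) ^ k * sqNorm (c - cstar) ∧
      (1 - (r : ℝ) * lambdaMinPos (Qᵀ * Q) /
            ((2 - 2 * Real.cos (M * π / (M + 1))) * d)) ^ k * sqNorm (c - cstar) ≤
        (1 - (r : ℝ) * lambdaMinPos (Qᵀ * Q) / (4 * d)) ^ k * sqNorm (c - cstar) := by
  classical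
  obtain ⟨e0, he0r⟩ := hr_att
  haveI : Nonempty V := ⟨hd e0⟩
  obtain ⟨l0, hl0M⟩ := hM_att
  have hd0 : 0 < d := l0.pos
  have hdR : (0:ℝ) < (d:ℝ) := by exact_mod_cast hd0
  have hM1 : 1 ≤ M := by
    obtain ⟨l1, hl1⟩ := hcover e0
    exact le_trans (Finset.card_pos.mpr ⟨e0, hl1⟩) (hM_le l1)
  set α := lambdaMinPos (Qᵀ * Q) with hα
  have hβeq : 2 - 2 * Real.cos ((M:ℝ) * π / ((M:ℝ) + 1)) = 2 + 2 * Real.cos (π / ((M:ℝ) + 1)) := by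
    have hne : ((M:ℝ) + 1) ≠ 0 := by positivity
    have h1 : (M:ℝ) * π / ((M:ℝ) + 1) = π - π / ((M:ℝ) + 1) := by
      field_simp
      ring
    rw [h1, Real.cos_pi_sub]
    ring
  set β : ℝ := 2 + 2 * Real.cos (π / ((M:ℝ) + 1)) with hβ
  have hcosnn : 0 ≤ Real.cos (π / ((M:ℝ)+1)) := by
    apply Real.cos_nonneg_of_mem_Icc
    constructor
    · have h0 : (0:ℝ) ≤ π / ((M:ℝ)+1) := by positivity
      have := Real.pi_pos
      linarith
    · have hM2 : (2:ℝ) ≤ (M:ℝ) + 1 := by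
        have : (1:ℝ) ≤ (M:ℝ) := by exact_mod_cast hM1
        linarith
      gcongr
  have hβpos : (0:ℝ) < β := by rw [hβ]; linarith
  have hβle4 : β ≤ 4 := by
    rw [hβ]
    nlinarith [Real.cos_le_one (π/((M:ℝ)+1))]
  have hconst := const_of_mulVec_zero hQ hG
  have hLne := L_ne_zero hQ e0
  obtain ⟨hαnn, hquad⟩ := quadform_lower_bound Q hconst hLne
  set ρ : ℝ := 1 - (r:ℝ) * α / (β * (d:ℝ)) with hρ
  have hcstconst : ∀ a b : V, cstar a = cstar b := by
    intro a b
    rw [hcstar]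
  have hcstar_sum : ∑ v, cstar v = ∑ v, c v := by
    have hcV : ((Fintype.card V : ℕ) : ℝ) ≠ 0 := by
      exact_mod_cast Fintype.card_ne_zero
    rw [hcstar, Finset.sum_const, Finset.card_univ, nsmul_eq_mul]
    field_simp
  -- master inequality
  have hmaster : ∀ y : V → ℝ, (∑ v, y v) = 0 →
      ∑ l : Fin d,
        (y - (mpinv (rowSub Q (τs l)) * rowSub Q (τs l)) *ᵥ y) ⬝ᵥ
          (y - (mpinv (rowSub Q (τs l)) * rowSub Q (τs l)) *ᵥ y)
        ≤ (ρ * (d:ℝ)) * (y ⬝ᵥ y) := by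
    intro y hy
    have h1 : ∀ l : Fin d,
        (y - (mpinv (rowSub Q (τs l)) * rowSub Q (τs l)) *ᵥ y) ⬝ᵥ
          (y - (mpinv (rowSub Q (τs l)) * rowSub Q (τs l)) *ᵥ y)
        ≤ y ⬝ᵥ y - ((rowSub Q (τs l) *ᵥ y) ⬝ᵥ (rowSub Q (τs l) *ᵥ y)) / β := by
      intro l
      exact block_descent hQ (hpath l) (hM_le l) (hβ ▸ hβpos) y
    have hdc : (r:ℝ) * ((Q *ᵥ y) ⬝ᵥ (Q *ᵥ y)) ≤
        ∑ l : Fin d, (rowSub Q (τs l) *ᵥ y) ⬝ᵥ (rowSub Q (τs l) *ᵥ y) := by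
      have hblock : ∀ l : Fin d, (rowSub Q (τs l) *ᵥ y) ⬝ᵥ (rowSub Q (τs l) *ᵥ y)
          = ∑ e : E, (if e ∈ τs l then ((Q *ᵥ y) e)^2 else 0) := by
        intro l
        have e1 : (rowSub Q (τs l) *ᵥ y) ⬝ᵥ (rowSub Q (τs l) *ᵥ y)
            = ∑ i : τs l, ((Q *ᵥ y) i.1)^2 := by
          apply Finset.sum_congr rfl
          intro i _
          rw [rowSub_mulVec]
          ring
        rw [e1, Finset.sum_coe_sort (τs l) (fun e => ((Q *ᵥ y) e)^2),
          Finset.sum_ite_mem, Finset.univ_inter]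
      rw [Finset.sum_congr rfl (fun l _ => hblock l), Finset.sum_comm]
      have hQyy : (Q *ᵥ y) ⬝ᵥ (Q *ᵥ y) = ∑ e : E, ((Q *ᵥ y) e)^2 := by
        apply Finset.sum_congr rfl
        intros
        ring
      rw [hQyy, Finset.mul_sum]
      apply Finset.sum_le_sum
      intro e _
      have hcnt : ∑ l : Fin d, (if e ∈ τs l then ((Q *ᵥ y) e)^2 else 0)
          = ((Finset.univ.filter fun l => e ∈ τs l).card : ℝ) * ((Q *ᵥ y) e)^2 := by
        rw [Finset.sum_ite, Finset.sum_const, Finset.sum_const_zero, add_zero, nsmul_eq_mul]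
      rw [hcnt]
      apply mul_le_mul_of_nonneg_right _ (sq_nonneg _)
      exact_mod_cast hr_le e
    have hform : y ⬝ᵥ (Qᵀ * Q) *ᵥ y = (Q *ᵥ y) ⬝ᵥ (Q *ᵥ y) := by
      rw [← mulVec_mulVec, dotProduct_mulVec, vecMul_transpose]
    have hq2 : α * (y ⬝ᵥ y) ≤ (Q *ᵥ y) ⬝ᵥ (Q *ᵥ y) := by
      rw [← hform]
      exact hquad y hy
    calc ∑ l : Fin d,
        (y - (mpinv (rowSub Q (τs l)) * rowSub Q (τs l)) *ᵥ y) ⬝ᵥ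
          (y - (mpinv (rowSub Q (τs l)) * rowSub Q (τs l)) *ᵥ y)
        ≤ ∑ l : Fin d,
            (y ⬝ᵥ y - ((rowSub Q (τs l) *ᵥ y) ⬝ᵥ (rowSub Q (τs l) *ᵥ y)) / β) :=
          Finset.sum_le_sum (fun l _ => h1 l)
      _ = (d:ℝ) * (y ⬝ᵥ y)
          - (∑ l : Fin d, (rowSub Q (τs l) *ᵥ y) ⬝ᵥ (rowSub Q (τs l) *ᵥ y)) / β := by
          rw [Finset.sum_sub_distrib, Finset.sum_const, Finset.card_univ, Fintype.card_fin,
            nsmul_eq_mul, ← Finset.sum_div]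
      _ ≤ (d:ℝ) * (y ⬝ᵥ y) - ((r:ℝ) * (α * (y ⬝ᵥ y))) / β := by
          have hnum : (r:ℝ) * (α * (y ⬝ᵥ y))
              ≤ ∑ l : Fin d, (rowSub Q (τs l) *ᵥ y) ⬝ᵥ (rowSub Q (τs l) *ᵥ y) := by
            calc (r:ℝ) * (α * (y ⬝ᵥ y)) ≤ (r:ℝ) * ((Q *ᵥ y) ⬝ᵥ (Q *ᵥ y)) := by
                  apply mul_le_mul_of_nonneg_left hq2 (by positivity)
              _ ≤ _ := hdc
          have hdivle : ((r:ℝ) * (α * (y ⬝ᵥ y))) / β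
              ≤ (∑ l : Fin d, (rowSub Q (τs l) *ᵥ y) ⬝ᵥ (rowSub Q (τs l) *ᵥ y)) / β := by
            gcongr
          linarith
      _ = (ρ * (d:ℝ)) * (y ⬝ᵥ y) := by
          have hρd : ρ * (d:ℝ) = (d:ℝ) - (r:ℝ) * α / β := by
            rw [hρ]
            field_simp
          rw [hρd]
          ring
  -- nonnegativity of ρ
  have hρdnn : 0 ≤ ρ * (d:ℝ) := by
    set y0 : V → ℝ :=
      fun w => (if w = hd e0 then (1:ℝ) else 0) - (if w = tl e0 then (1:ℝ) else 0) with hy0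
    have hy0sum : ∑ v, y0 v = 0 := by
      rw [hy0, Finset.sum_sub_distrib,
        Finset.sum_ite_eq' Finset.univ (hd e0) (fun _ => (1:ℝ)),
        Finset.sum_ite_eq' Finset.univ (tl e0) (fun _ => (1:ℝ))]
      simp
    have h01 : y0 (hd e0) = 1 := by
      rw [hy0]
      simp [(hQ.1 e0).ne]
    have hy0pos : 0 < y0 ⬝ᵥ y0 :=
      Finset.sum_pos' (fun w _ => mul_self_nonneg _)
        ⟨hd e0, Finset.mem_univ _, by rw [h01]; norm_num⟩
    have h0 : (0:ℝ) ≤ ∑ l : Fin d,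
        (y0 - (mpinv (rowSub Q (τs l)) * rowSub Q (τs l)) *ᵥ y0) ⬝ᵥ
          (y0 - (mpinv (rowSub Q (τs l)) * rowSub Q (τs l)) *ᵥ y0) :=
      Finset.sum_nonneg fun l _ => dot_self_nonneg _
    have hm := hmaster y0 hy0sum
    nlinarith [hy0pos]
  have hρnn : 0 ≤ ρ := by
    have : ρ = (ρ * (d:ℝ)) / (d:ℝ) := by field_simp
    rw [this]
    exact div_nonneg hρdnn hdR.le
  -- iterates
  have hiter_succ : ∀ (k : ℕ) (σ : Fin (k+1) → Fin d),
      kaczIter Q 0 τs c (k+1) σ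
        = kaczStep Q 0 (τs (σ (Fin.last k))) (kaczIter Q 0 τs c k (σ ∘ Fin.castSucc)) :=
    fun k σ => rfl
  have hiter_sum : ∀ (k : ℕ) (σ : Fin k → Fin d),
      ∑ v, kaczIter Q 0 τs c k σ v = ∑ v, c v := by
    intro k
    induction k with
    | zero => intro σ; rfl
    | succ k ih =>
      intro σ
      rw [hiter_succ k σ, block_sum_pres hQ (hpath _) _, ih]
  have hy_zero : ∀ (k : ℕ) (σ : Fin k → Fin d),
      ∑ v, (kaczIter Q 0 τs c k σ - cstar) v = 0 := by
    intro k σ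
    have hsub : ∑ v, (kaczIter Q 0 τs c k σ - cstar) v
        = ∑ v, kaczIter Q 0 τs c k σ v - ∑ v, cstar v := by
      rw [← Finset.sum_sub_distrib]
      rfl
    rw [hsub, hiter_sum, hcstar_sum, sub_self]
  have hstep_conv : ∀ (l : Fin d) (x : V → ℝ),
      kaczStep Q 0 (τs l) x - cstar
        = (x - cstar) - (mpinv (rowSub Q (τs l)) * rowSub Q (τs l)) *ᵥ (x - cstar) := by
    intro l x
    rw [kaczStep_zero]
    have hker : rowSub Q (τs l) *ᵥ cstar = 0 := rowSub_const_mulVec hQ _ cstar hcstconst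
    have hPc : (mpinv (rowSub Q (τs l)) * rowSub Q (τs l)) *ᵥ cstar = 0 := by
      rw [← mulVec_mulVec, hker, mulVec_zero]
    rw [Matrix.mulVec_sub, hPc, sub_zero]
    abel
  -- the recursive bound
  have hSstep : ∀ k : ℕ,
      ∑ σ : Fin (k+1) → Fin d, sqNorm (kaczIter Q 0 τs c (k+1) σ - cstar)
        ≤ (ρ * (d:ℝ)) * ∑ σ : Fin k → Fin d, sqNorm (kaczIter Q 0 τs c k σ - cstar) := by
    intro k
    have hre : ∑ σ : Fin (k+1) → Fin d, sqNorm (kaczIter Q 0 τs c (k+1) σ - cstar)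
        = ∑ p : Fin d × (Fin k → Fin d),
            sqNorm (kaczIter Q 0 τs c (k+1) ((Fin.snocEquiv (fun _ => Fin d)) p) - cstar) :=
      (Equiv.sum_comp (Fin.snocEquiv (fun _ => Fin d))
        (fun σ => sqNorm (kaczIter Q 0 τs c (k+1) σ - cstar))).symm
    rw [hre, Fintype.sum_prod_type, Finset.sum_comm]
    have hterm : ∀ (σ' : Fin k → Fin d) (l : Fin d),
        kaczIter Q 0 τs c (k+1) ((Fin.snocEquiv (fun _ => Fin d)) (l, σ')) - cstar
          = (kaczIter Q 0 τs c k σ' - cstar)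
            - (mpinv (rowSub Q (τs l)) * rowSub Q (τs l)) *ᵥ
                (kaczIter Q 0 τs c k σ' - cstar) := by
      intro σ' l
      have e1 : ((Fin.snocEquiv (fun _ => Fin d)) (l, σ')) (Fin.last k) = l := by
        simp [Fin.snocEquiv]
      have e2 : ((Fin.snocEquiv (fun _ => Fin d)) (l, σ')) ∘ Fin.castSucc = σ' :=
        funext fun i => by simp [Fin.snocEquiv]
      rw [hiter_succ, e1, e2, hstep_conv]
    calc ∑ σ' : Fin k → Fin d, ∑ l : Fin d,
          sqNorm (kaczIter Q 0 τs c (k+1) ((Fin.snocEquiv (fun _ => Fin d)) (l, σ')) - cstar)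
        ≤ ∑ σ' : Fin k → Fin d, (ρ * (d:ℝ)) * sqNorm (kaczIter Q 0 τs c k σ' - cstar) := by
          apply Finset.sum_le_sum
          intro σ' _
          have hinner : ∑ l : Fin d,
              sqNorm (kaczIter Q 0 τs c (k+1) ((Fin.snocEquiv (fun _ => Fin d)) (l, σ')) - cstar)
              = ∑ l : Fin d,
                ((kaczIter Q 0 τs c k σ' - cstar)
                  - (mpinv (rowSub Q (τs l)) * rowSub Q (τs l)) *ᵥ
                      (kaczIter Q 0 τs c k σ' - cstar)) ⬝ᵥ
                ((kaczIter Q 0 τs c k σ' - cstar)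
                  - (mpinv (rowSub Q (τs l)) * rowSub Q (τs l)) *ᵥ
                      (kaczIter Q 0 τs c k σ' - cstar)) := by
            apply Finset.sum_congr rfl
            intro l _
            rw [hterm σ' l, sqNorm_eq_dot]
          rw [hinner, sqNorm_eq_dot]
          exact hmaster _ (hy_zero k σ')
      _ = (ρ * (d:ℝ)) * ∑ σ' : Fin k → Fin d, sqNorm (kaczIter Q 0 τs c k σ' - cstar) := by
          rw [Finset.mul_sum]
  have hS0 : ∑ σ : Fin 0 → Fin d, sqNorm (kaczIter Q 0 τs c 0 σ - cstar)
      = sqNorm (c - cstar) := by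
    haveI : Unique (Fin 0 → Fin d) :=
      ⟨⟨fun i => i.elim0⟩, fun f => funext fun i => i.elim0⟩
    rw [Fintype.sum_unique]
    rfl
  have hSbound : ∀ k : ℕ,
      ∑ σ : Fin k → Fin d, sqNorm (kaczIter Q 0 τs c k σ - cstar)
        ≤ (ρ * (d:ℝ))^k * sqNorm (c - cstar) := by
    intro k
    induction k with
    | zero => rw [hS0, pow_zero, one_mul]
    | succ k ih =>
      calc ∑ σ : Fin (k+1) → Fin d, sqNorm (kaczIter Q 0 τs c (k+1) σ - cstar)
          ≤ (ρ * (d:ℝ)) * ∑ σ : Fin k → Fin d, sqNorm (kaczIter Q 0 τs c k σ - cstar) :=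
            hSstep k
        _ ≤ (ρ * (d:ℝ)) * ((ρ * (d:ℝ))^k * sqNorm (c - cstar)) :=
            mul_le_mul_of_nonneg_left ih hρdnn
        _ = (ρ * (d:ℝ))^(k+1) * sqNorm (c - cstar) := by ring
  have hsqnn : 0 ≤ sqNorm (c - cstar) := by
    rw [sqNorm_eq_dot]
    exact dot_self_nonneg _
  -- conclusion
  intro k
  have hfold : (1:ℝ) - (r:ℝ) * α / (β * (d:ℝ)) = ρ := hρ.symm
  rw [hβeq, hfold]
  constructor
  · rw [div_le_iff₀ (by positivity : (0:ℝ) < (d:ℝ)^k)]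
    calc ∑ σ : Fin k → Fin d, sqNorm (kaczIter Q 0 τs c k σ - cstar)
        ≤ (ρ * (d:ℝ))^k * sqNorm (c - cstar) := hSbound k
      _ = ρ^k * sqNorm (c - cstar) * (d:ℝ)^k := by
          rw [mul_pow]
          ring
  · apply mul_le_mul_of_nonneg_right _ hsqnn
    apply pow_le_pow_left₀ hρnn
    rw [hρ]
    have h4 : (0:ℝ) < β * (d:ℝ) := by positivity
    have h5 : β * (d:ℝ) ≤ 4 * (d:ℝ) := by nlinarith
    have h6 : (0:ℝ) ≤ (r:ℝ) * α := mul_nonneg (by positivity) hαnn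
    have h7 : (r:ℝ) * α / (4 * (d:ℝ)) ≤ (r:ℝ) * α / (β * (d:ℝ)) := by
      gcongr
    linarith


end
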